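/- For every integer j ≥ 0 and integer n ≥ 1, the imaginary part of ∫₀^π exp(j·e^{iθ}) · sin(nθ) dθ equals (jⁿ/n!)·(π/2). -/

import Mathlib

open Real Complex

private lemma integral_cos_mul_eq (c : ℝ) (hc : c ≠ 0) :
    (∫ θ in (0:ℝ)..π, Real.cos (c * θ)) = Real.sin (c * π) / c := by
  rw [intervalIntegral.integral_comp_mul_left (fun x => Real.cos x) hc]
  simp [integral_cos, smul_eq_mul]
  ring

private lemma sin_ortho (k n : ℕ) (hn : 1 ≤ n) :
    (∫ θ in (0:ℝ)..π, Real.sin (k * θ) * Real.sin (n * θ)) =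
      if k = n then π / 2 else 0 := by
  have key : ∀ θ : ℝ, Real.sin (k * θ) * Real.sin (n * θ)
      = (Real.cos (((k:ℝ) - n) * θ) - Real.cos (((k:ℝ) + n) * θ)) / 2 := by
    intro θ
    rw [Real.cos_sub_cos]
    have h1 : ((((k:ℝ) - n) * θ + ((k:ℝ) + n) * θ) / 2) = (k:ℝ) * θ := by ring
    have h2 : ((((k:ℝ) - n) * θ - ((k:ℝ) + n) * θ) / 2) = -((n:ℝ) * θ) := by ring
    rw [h1, h2, Real.sin_neg]; ring
  have hic : ∀ c : ℝ, IntervalIntegrable (fun θ => Real.cos (c * θ))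
      MeasureTheory.volume 0 π :=
    fun c => (Real.continuous_cos.comp (continuous_const.mul continuous_id)).intervalIntegrable 0 π
  simp_rw [key]
  rw [intervalIntegral.integral_div, intervalIntegral.integral_sub (hic _) (hic _)]
  have hsum : ((k:ℝ) + n) ≠ 0 := by
    have : (0:ℝ) < (k:ℝ) + n := by
      have : (1:ℝ) ≤ (n:ℝ) := by exact_mod_cast hn
      nlinarith [Nat.cast_nonneg (α := ℝ) k]
    exact ne_of_gt this
  have hsin_sum : Real.sin (((k:ℝ) + n) * π) = 0 := by
    have : ((k:ℝ) + n) = ((k + n : ℕ) : ℝ) := by push_cast; ring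
    rw [this, Real.sin_nat_mul_pi]
  by_cases h : k = n
  · subst h
    rw [if_pos rfl]
    have h0 : ((k:ℝ) - k) = 0 := by ring
    simp only [h0, zero_mul, Real.cos_zero]
    rw [intervalIntegral.integral_const, integral_cos_mul_eq _ hsum, hsin_sum]
    simp
  · rw [if_neg h]
    have hdiff : ((k:ℝ) - n) ≠ 0 := by
      intro hc
      apply h
      have : (k:ℝ) = n := by linarith [sub_eq_zero.mp hc]
      exact_mod_cast this
    have hsin_diff : Real.sin (((k:ℝ) - n) * π) = 0 := by
      have : ((k:ℝ) - n) = (((k:ℤ) - n : ℤ) : ℝ) := by push_cast; ring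
      rw [this, Real.sin_int_mul_pi]
    rw [integral_cos_mul_eq _ hdiff, integral_cos_mul_eq _ hsum, hsin_diff, hsin_sum]
    simp

private lemma term_im (j k : ℕ) (θ : ℝ) :
    (((j:ℂ) * Complex.exp (θ * Complex.I)) ^ k / (k.factorial : ℂ)).im
      = (j:ℝ) ^ k / (k.factorial : ℝ) * Real.sin (k * θ) := by
  have harg : ((((k:ℝ) * θ : ℝ)) : ℂ) * Complex.I = (k : ℂ) * ((θ:ℂ) * Complex.I) := by
    push_cast; ring
  have h : ((j:ℂ) * Complex.exp (θ * Complex.I)) ^ k / (k.factorial : ℂ)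
      = ((((j:ℝ) ^ k / (k.factorial : ℝ)) : ℝ) : ℂ)
          * Complex.exp ((((k:ℝ) * θ : ℝ) : ℂ) * Complex.I) := by
    rw [mul_pow, ← Complex.exp_nat_mul, harg]
    push_cast
    have hk : ((k.factorial : ℂ)) ≠ 0 := by exact_mod_cast Nat.cast_ne_zero.mpr k.factorial_ne_zero
    field_simp
  rw [h]
  simp only [Complex.mul_im, Complex.ofReal_re, Complex.ofReal_im,
    Complex.exp_ofReal_mul_I_im, zero_mul, add_zero]

private lemma exp_im_tsum (j : ℕ) (θ : ℝ) :
    (Complex.exp ((j:ℂ) * Complex.exp (θ * Complex.I))).im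
      = ∑' k : ℕ, (j:ℝ) ^ k / (k.factorial : ℝ) * Real.sin (k * θ) := by
  have hx : ∀ z : ℂ, Complex.exp z = ∑' k : ℕ, z ^ k / (k.factorial : ℂ) := by
    intro z
    rw [Complex.exp_eq_exp_ℂ, NormedSpace.exp_eq_tsum_div]
  rw [hx]
  rw [← Complex.imCLM_apply,
    Complex.imCLM.map_tsum (NormedSpace.expSeries_div_summable _)]
  congr 1
  ext k
  rw [Complex.imCLM_apply, term_im]

theorem im_integral_exp_j (j : ℕ) (n : ℕ) (hn : 1 ≤ n) :
    (∫ θ in (0:ℝ)..π,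
        Complex.exp ((j : ℂ) * Complex.exp (θ * Complex.I)) * (Real.sin (n * θ) : ℂ)).im =
      (j : ℝ) ^ n / Nat.factorial n * (π / 2) := by
  have hπ : (0:ℝ) ≤ π := Real.pi_pos.le
  set F : ℕ → ℝ → ℝ := fun k θ => (j:ℝ) ^ k / (k.factorial : ℝ) * Real.sin (k * θ) * Real.sin (n * θ)
    with hF
  have hcont : Continuous fun θ : ℝ =>
      Complex.exp ((j : ℂ) * Complex.exp (θ * Complex.I)) * (Real.sin (n * θ) : ℂ) := by
    apply Continuous.mul
    · exact Complex.continuous_exp.comp (continuous_const.mul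
        (Complex.continuous_exp.comp (Complex.continuous_ofReal.mul continuous_const)))
    · exact Complex.continuous_ofReal.comp
        (Real.continuous_sin.comp (continuous_const.mul continuous_id))
  rw [← Complex.imCLM_apply,
    ← ContinuousLinearMap.intervalIntegral_comp_comm Complex.imCLM
      (hcont.intervalIntegrable 0 π)]
  have hpt : ∀ θ : ℝ,
      Complex.imCLM (Complex.exp ((j : ℂ) * Complex.exp (θ * Complex.I)) * (Real.sin (n * θ) : ℂ))
        = ∑' k : ℕ, F k θ := by
    intro θ
    rw [Complex.imCLM_apply, Complex.mul_im, Complex.ofReal_im, Complex.ofReal_re,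
      mul_zero, zero_add, exp_im_tsum]
    rw [tsum_mul_right]
  simp_rw [hpt]
  -- swap tsum and integral
  have hFcont : ∀ k, Continuous (F k) := by
    intro k
    exact (continuous_const.mul (Real.continuous_sin.comp
      (continuous_const.mul continuous_id))).mul
      (Real.continuous_sin.comp (continuous_const.mul continuous_id))
  have hFint : ∀ k, MeasureTheory.IntegrableOn (F k) (Set.Ioc (0:ℝ) π) := by
    intro k
    exact (hFcont k).integrableOn_Ioc
  have hbound : ∀ k θ, ‖F k θ‖ ≤ (j:ℝ) ^ k / (k.factorial : ℝ) := by
    intro k θ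
    have h1 : |Real.sin ((k:ℝ) * θ)| ≤ 1 := Real.abs_sin_le_one _
    have h2 : |Real.sin ((n:ℝ) * θ)| ≤ 1 := Real.abs_sin_le_one _
    have hc : (0:ℝ) ≤ (j:ℝ) ^ k / (k.factorial : ℝ) := by positivity
    calc ‖F k θ‖ = |(j:ℝ) ^ k / (k.factorial : ℝ)| * |Real.sin ((k:ℝ) * θ)| * |Real.sin ((n:ℝ) * θ)| := by
          simp only [hF]; rw [Real.norm_eq_abs, abs_mul, abs_mul]
      _ ≤ |(j:ℝ) ^ k / (k.factorial : ℝ)| * 1 * 1 := by gcongr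
      _ = (j:ℝ) ^ k / (k.factorial : ℝ) := by rw [mul_one, mul_one, _root_.abs_of_nonneg hc]
  have hFnorm : ∀ k, (∫ θ in Set.Ioc (0:ℝ) π, ‖F k θ‖) ≤ (j:ℝ) ^ k / (k.factorial : ℝ) * π := by
    intro k
    have : (∫ θ in Set.Ioc (0:ℝ) π, ‖F k θ‖)
        ≤ ∫ _θ in Set.Ioc (0:ℝ) π, (j:ℝ) ^ k / (k.factorial : ℝ) := by
      apply MeasureTheory.setIntegral_mono_on ((hFint k).norm)
        ((MeasureTheory.integrableOn_const_iff).mpr (Or.inr (by simp [Real.pi_pos])))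
        measurableSet_Ioc
      intro θ _
      exact hbound k θ
    calc (∫ θ in Set.Ioc (0:ℝ) π, ‖F k θ‖) ≤ _ := this
      _ = (j:ℝ) ^ k / (k.factorial : ℝ) * π := by
          rw [MeasureTheory.setIntegral_const]
          simp [Real.volume_Ioc, hπ, smul_eq_mul, mul_comm]
  have hsummable : Summable fun k => ∫ θ in Set.Ioc (0:ℝ) π, ‖F k θ‖ := by
    apply Summable.of_nonneg_of_le
      (fun k => MeasureTheory.integral_nonneg (fun θ => norm_nonneg _)) hFnorm
    exact (Real.summable_pow_div_factorial (j:ℝ)).mul_right π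
  rw [intervalIntegral.integral_of_le hπ,
    ← MeasureTheory.integral_tsum_of_summable_integral_norm hFint hsummable]
  have hterm : ∀ k, (∫ θ in Set.Ioc (0:ℝ) π, F k θ)
      = (j:ℝ) ^ k / (k.factorial : ℝ) * (if k = n then π / 2 else 0) := by
    intro k
    rw [← intervalIntegral.integral_of_le hπ]
    have : (∫ θ in (0:ℝ)..π, F k θ)
        = (j:ℝ) ^ k / (k.factorial : ℝ) * ∫ θ in (0:ℝ)..π, Real.sin (k * θ) * Real.sin (n * θ) := by
      rw [← intervalIntegral.integral_const_mul]
      congr 1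
      ext θ
      rw [hF]; ring
    rw [this, sin_ortho k n hn]
  simp_rw [hterm]
  rw [tsum_eq_single n]
  · simp
  · intro k hk
    simp [hk]
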